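/- Let n be a positive natural number, K_C and K_E invertible n×n real matrices, ρ ∈ ℝ, and k_C, k_E, y_C, y_E ∈ ℝⁿ. Set the 2n×2n block matrix M = [[K_C, ρK_C], [ρK_C, ρ²K_C + K_E]], the 2n-vector k̃ = (ρk_C, ρ²k_C + k_E) and the 2n-vector ỹ = (y_C, y_E). Then k̃ᵀ M⁻¹ ỹ = ρ · k_Cᵀ K_C⁻¹ y_C + k_Eᵀ K_E⁻¹ (y_E − ρ y_C). In words: the joint (Kennedy–O'Hagan) multi-fidelity predictive mean equals the recursive-formulation predictive mean. -/
import Mathlib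


open Matrix

theorem mufi_predictive_mean_equal_designs
    (n : ℕ) (hn : 0 < n)
    (K_C K_E : Matrix (Fin n) (Fin n) ℝ)
    (hC : IsUnit K_C.det) (hE : IsUnit K_E.det)
    (ρ : ℝ) (k_C k_E y_C y_E : Fin n → ℝ) :
    let M : Matrix (Fin n ⊕ Fin n) (Fin n ⊕ Fin n) ℝ :=
      Matrix.fromBlocks K_C (ρ • K_C) (ρ • K_C) (ρ ^ 2 • K_C + K_E)
    let k : Fin n ⊕ Fin n → ℝ := Sum.elim (ρ • k_C) (ρ ^ 2 • k_C + k_E)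
    let y : Fin n ⊕ Fin n → ℝ := Sum.elim y_C y_E
    k ⬝ᵥ (M⁻¹ *ᵥ y) =
      ρ * (k_C ⬝ᵥ (K_C⁻¹ *ᵥ y_C)) + k_E ⬝ᵥ (K_E⁻¹ *ᵥ (y_E - ρ • y_C)) := by
  intro M k y
  have : Invertible K_C := invertibleOfIsUnitDet K_C hC
  have hDet : M.det = K_C.det * K_E.det := by
    have := Matrix.det_fromBlocks₁₁ K_C (ρ • K_C) (ρ • K_C) (ρ ^ 2 • K_C + K_E)
    rw [show M = Matrix.fromBlocks K_C (ρ • K_C) (ρ • K_C) (ρ ^ 2 • K_C + K_E) from rfl, this]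
    congr 1
    congr 1
    rw [Matrix.invOf_eq_nonsing_inv]
    have h : (ρ • K_C) * K_C⁻¹ * (ρ • K_C) = ρ ^ 2 • K_C := by
      rw [Matrix.smul_mul, Matrix.mul_smul, Matrix.smul_mul, smul_smul, ← sq,
        Matrix.mul_nonsing_inv _ hC, Matrix.one_mul]
    rw [h]
    abel
  have hM : IsUnit M.det := by rw [hDet]; exact hC.mul hE
  set z₂ : Fin n → ℝ := K_E⁻¹ *ᵥ (y_E - ρ • y_C) with hz₂
  set z₁ : Fin n → ℝ := K_C⁻¹ *ᵥ y_C - ρ • z₂ with hz₁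
  have hMz : M *ᵥ Sum.elim z₁ z₂ = y := by
    rw [show M = Matrix.fromBlocks K_C (ρ • K_C) (ρ • K_C) (ρ ^ 2 • K_C + K_E) from rfl,
      Matrix.fromBlocks_mulVec]
    have h1 : K_C *ᵥ z₁ = y_C - ρ • (K_C *ᵥ z₂) := by
      rw [hz₁, Matrix.mulVec_sub, Matrix.mulVec_mulVec, Matrix.mul_nonsing_inv _ hC,
        Matrix.one_mulVec, Matrix.mulVec_smul]
    have h2 : K_E *ᵥ z₂ = y_E - ρ • y_C := by
      rw [hz₂, Matrix.mulVec_mulVec, Matrix.mul_nonsing_inv _ hE, Matrix.one_mulVec]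
    ext (i | i) <;>
      simp [y, Matrix.add_mulVec, Matrix.smul_mulVec, h1, h2, smul_smul, ← sq,
        Pi.add_apply, Pi.sub_apply, Pi.smul_apply, smul_eq_mul] <;> ring
  have hinv : M⁻¹ *ᵥ y = Sum.elim z₁ z₂ := by
    rw [← hMz, Matrix.mulVec_mulVec, Matrix.nonsing_inv_mul _ hM, Matrix.one_mulVec]
  rw [hinv]
  have hk : k ⬝ᵥ Sum.elim z₁ z₂ = (ρ • k_C) ⬝ᵥ z₁ + (ρ ^ 2 • k_C + k_E) ⬝ᵥ z₂ := by
    simp [k, dotProduct, Fintype.sum_sum_type]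
  rw [hk, hz₁]
  simp [dotProduct_sub, add_dotProduct, smul_dotProduct,
    dotProduct_smul, smul_eq_mul]
  ring
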